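/- Let R_F be the class of 0-1 rewards r_f(x,y) = 1{y = f^AR(x)} induced by a binary class F of next-token predictors with finite VC dimension. Then VC(R_F) ≤ c · log(T) · VC(F) for a universal constant c. -/

import Mathlib

/-- Autoregressive unrolling of a next-token predictor. -/
def arList (f : List Bool → Bool) (x : List Bool) : ℕ → List Bool
  | 0 => []
  | T + 1 => arList f x T ++ [f (x ++ arList f x T)]

lemma arList_length (f : List Bool → Bool) (x : List Bool) (T : ℕ) :
    (arList f x T).length = T := by
  induction T with
  | zero => rfl
  | succ T ih => simp [arList, ih]

lemma arList_take (f : List Bool → Bool) (x : List Bool) {t T : ℕ} (h : t ≤ T) :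
    (arList f x T).take t = arList f x t := by
  induction T with
  | zero => interval_cases t; rfl
  | succ T ih =>
    rcases Nat.lt_or_ge t (T+1) with h' | h'
    · rw [arList, List.take_append_of_le_length (by rw [arList_length]; omega)]
      exact ih (by omega)
    · have : t = T + 1 := le_antisymm h h'
      subst this
      rw [List.take_of_length_le (by simp [arList_length])]

lemma arList_eq_iff (f : List Bool → Bool) (x y : List Bool) (T : ℕ) :
    y = arList f x T ↔
      (y.length = T ∧ ∀ t < T, y.take (t+1) = y.take t ++ [f (x ++ y.take t)]) := by
  constructor
  · rintro rfl
    refine ⟨arList_length f x T, fun t ht => ?_⟩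
    rw [arList_take f x (by omega : t + 1 ≤ T), arList_take f x (le_of_lt ht)]
    rfl
  · rintro ⟨hlen, h⟩
    have key : ∀ t, t ≤ T → y.take t = arList f x t := by
      intro t ht
      induction t with
      | zero => rfl
      | succ t ih =>
        rw [h t (by omega), ih (by omega)]
        rfl
    have := key T le_rfl
    rwa [List.take_of_length_le (le_of_eq hlen)] at this

lemma reward_depends (f g : List Bool → Bool) (x y : List Bool) (T : ℕ)
    (h : ∀ t < T, f (x ++ y.take t) = g (x ++ y.take t)) :
    decide (y = arList f x T) = decide (y = arList g x T) := by
  have : (y = arList f x T) ↔ (y = arList g x T) := by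
    rw [arList_eq_iff, arList_eq_iff]
    constructor <;> rintro ⟨h1, h2⟩ <;> refine ⟨h1, fun t ht => ?_⟩
    · rw [h2 t ht, h t ht]
    · rw [h2 t ht, h t ht]
  simp [this]

/-- `H` shatters the points `xs`. -/
def Shatters {α : Type*} (H : Set (α → Bool)) {n : ℕ} (xs : Fin n → α) : Prop :=
  ∀ v : Fin n → Bool, ∃ h ∈ H, ∀ i, h (xs i) = v i

/-- The VC dimension of `H` is at most `d : ℕ`. -/
def VCdimLe {α : Type*} (H : Set (α → Bool)) (d : ℕ) : Prop :=
  ∀ n (xs : Fin n → α), Shatters H xs → n ≤ d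

/-- The class of 0-1 rewards `r_f(x,y) = 1{y = f^AR(x)}` induced by `F`. -/
def rewardClass01 (F : Set (List Bool → Bool)) (T : ℕ) :
    Set (List Bool × List Bool → Bool) :=
  {g | ∃ f ∈ F, g = fun p => decide (p.2 = arList f p.1 T)}

open Finset in
lemma card_bound {F : Set (List Bool → Bool)} {d T : ℕ} (hF : VCdimLe F d)
    {m : ℕ} {zs : Fin m → List Bool × List Bool}
    (hsh : Shatters (rewardClass01 F T) zs) :
    2 ^ m ≤ ∑ k ∈ Finset.range (d+1), (m * T).choose k := by
  classical
  have H : ∀ v : Fin m → Bool, ∃ f ∈ F,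
      ∀ i, decide ((zs i).2 = arList f (zs i).1 T) = v i := by
    intro v
    obtain ⟨g, hg, hgv⟩ := hsh v
    obtain ⟨f, hf, rfl⟩ := hg
    exact ⟨f, hf, hgv⟩
  choose ff hffF hffv using H
  set p : Fin m × Fin T → List Bool :=
    fun q => (zs q.1).1 ++ ((zs q.1).2).take q.2 with hp
  set Φ : (Fin m → Bool) → Finset (Fin m × Fin T) :=
    fun v => Finset.univ.filter (fun q => ff v (p q) = true) with hΦ
  have Φinj : Function.Injective Φ := by
    intro v w hvw
    have hpt : ∀ q, ff v (p q) = ff w (p q) := by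
      intro q
      rw [Bool.eq_iff_iff]
      constructor <;> intro h
      · have : q ∈ Φ w := by rw [← hvw]; simp [hΦ, h]
        simpa [hΦ] using this
      · have : q ∈ Φ v := by rw [hvw]; simp [hΦ, h]
        simpa [hΦ] using this
    funext i
    rw [← hffv v i, ← hffv w i]
    apply reward_depends
    intro t ht
    exact hpt (i, ⟨t, ht⟩)
  set 𝒜 : Finset (Finset (Fin m × Fin T)) := Finset.univ.image Φ with h𝒜
  have hcard : 2 ^ m = 𝒜.card := by
    rw [h𝒜, Finset.card_image_of_injective _ Φinj]
    simp
  have hVC : ∀ s : Finset (Fin m × Fin T), 𝒜.Shatters s → s.card ≤ d := by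
    intro s hs
    set e : Fin s.card → Fin m × Fin T := fun i => (s.equivFin.symm i : Fin m × Fin T)
      with he
    have emem : ∀ i, e i ∈ s := fun i => (s.equivFin.symm i).2
    have einj : Function.Injective e :=
      fun i j h => s.equivFin.symm.injective (Subtype.ext h)
    apply hF s.card (fun i => p (e i))
    intro v
    have hts : Finset.image e (Finset.univ.filter (fun i => v i = true)) ⊆ s := by
      intro q hq
      obtain ⟨i, _, rfl⟩ := Finset.mem_image.1 hq
      exact emem i
    obtain ⟨u, hu, hsu⟩ := hs hts
    obtain ⟨w, _, rfl⟩ := Finset.mem_image.1 hu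
    refine ⟨ff w, hffF w, fun i => ?_⟩
    rw [Bool.eq_iff_iff]
    have h1 : e i ∈ Φ w ↔ ff w (p (e i)) = true := by simp [hΦ]
    have h2 : e i ∈ s ∩ Φ w ↔ e i ∈ Φ w := by simp [emem i]
    have h3 : e i ∈ Finset.image e (Finset.univ.filter (fun i => v i = true)) ↔
        v i = true := by
      simp only [Finset.mem_image, Finset.mem_filter, Finset.mem_univ, true_and]
      constructor
      · rintro ⟨j, hj, hji⟩; rwa [← einj hji]
      · intro h; exact ⟨i, h, rfl⟩
    rw [← h1, ← h2, hsu, h3]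
  calc 2 ^ m = 𝒜.card := hcard
    _ ≤ 𝒜.shatterer.card := Finset.card_le_card_shatterer 𝒜
    _ ≤ ((Finset.range (d+1)).biUnion
          (fun k => Finset.powersetCard k (Finset.univ : Finset (Fin m × Fin T)))).card := by
        apply Finset.card_le_card
        intro s hs
        have hsh' := Finset.mem_shatterer.1 hs
        have : s.card ≤ d := hVC s hsh'
        apply Finset.mem_biUnion.2
        exact ⟨s.card, Finset.mem_range.2 (by omega),
          Finset.mem_powersetCard.2 ⟨Finset.subset_univ s, rfl⟩⟩
    _ ≤ ∑ k ∈ Finset.range (d+1), (m * T).choose k := by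
        apply le_trans (Finset.card_biUnion_le)
        apply Finset.sum_le_sum
        intro k _
        rw [Finset.card_powersetCard]
        simp

lemma analytic {T d m : ℕ} (hT : 2 ≤ T) (hd : 1 ≤ d)
    (h : 2 ^ m ≤ ∑ k ∈ Finset.range (d+1), (m * T).choose k) :
    (m : ℝ) ≤ 10 * Real.log T * d := by
  have hlog2 : (0.6931 : ℝ) ≤ Real.log 2 := by
    have := Real.log_two_gt_d9; linarith
  have hlogT : Real.log 2 ≤ Real.log T := by
    apply Real.log_le_log (by norm_num)
    exact_mod_cast hT
  have hlogT0 : (0.6931 : ℝ) ≤ Real.log T := le_trans hlog2 hlogT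
  have hd' : (1:ℝ) ≤ d := by exact_mod_cast hd
  rcases Nat.eq_zero_or_pos m with rfl | hm
  · simp
    nlinarith
  rcases le_or_gt (m * T) d with hcase | hcase
  · -- m ≤ m*T ≤ d
    have h1 : m ≤ d := le_trans (Nat.le_mul_of_pos_right m (by omega)) hcase
    have : (m:ℝ) ≤ d := by exact_mod_cast h1
    nlinarith
  · -- main case
    set N := m * T with hN
    have hN1 : 1 ≤ N := by rw [hN]; exact Nat.one_le_iff_ne_zero.2 (by positivity)
    have hNpos : (0:ℝ) < N := by exact_mod_cast hN1
    have hdpos : (0:ℝ) < d := by linarith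
    have hmpos : (0:ℝ) < m := by exact_mod_cast hm
    have hTpos : (0:ℝ) < T := by positivity
    have hdN : (d:ℝ)/N ≤ 1 := by
      rw [div_le_one hNpos]
      exact_mod_cast le_of_lt hcase
    have hdN0 : (0:ℝ) < (d:ℝ)/N := by positivity
    -- S * (d/N)^d ≤ exp d
    have key1 : (∑ k ∈ Finset.range (d+1), ((N.choose k : ℝ))) * ((d:ℝ)/N)^d
        ≤ Real.exp d := by
      rw [Finset.sum_mul]
      calc ∑ k ∈ Finset.range (d+1), (N.choose k : ℝ) * ((d:ℝ)/N)^d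
          ≤ ∑ k ∈ Finset.range (d+1), (N.choose k : ℝ) * ((d:ℝ)/N)^k := by
            apply Finset.sum_le_sum
            intro k hk
            apply mul_le_mul_of_nonneg_left _ (by positivity)
            exact pow_le_pow_of_le_one (le_of_lt hdN0) hdN
              (Nat.lt_succ_iff.1 (Finset.mem_range.1 hk))
        _ ≤ ∑ k ∈ Finset.range (N+1), (N.choose k : ℝ) * ((d:ℝ)/N)^k := by
            apply Finset.sum_le_sum_of_subset_of_nonneg
            · apply Finset.range_subset_range.2; omega
            · intro k _ _; positivity
        _ = (1 + (d:ℝ)/N)^N := by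
            rw [show (1 + (d:ℝ)/N) = ((d:ℝ)/N + 1) by ring, add_pow]
            apply Finset.sum_congr rfl
            intro k _
            ring
        _ ≤ (Real.exp ((d:ℝ)/N))^N := by
            apply pow_le_pow_left₀ (by positivity)
            linarith [Real.add_one_le_exp ((d:ℝ)/N)]
        _ = Real.exp d := by
            rw [← Real.exp_nat_mul]
            congr 1
            field_simp
    have key2 : (2:ℝ)^m * ((d:ℝ)/N)^d ≤ Real.exp d := by
      refine le_trans (mul_le_mul_of_nonneg_right ?_ (by positivity)) key1
      exact_mod_cast h
    -- take logs
    have hlogineq : (m:ℝ) * Real.log 2 + (d:ℝ) * (Real.log d - Real.log N)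
        ≤ d := by
      have hpos : (0:ℝ) < (2:ℝ)^m * ((d:ℝ)/N)^d := by positivity
      have := Real.log_le_log hpos key2
      rw [Real.log_mul (by positivity) (by positivity), Real.log_pow, Real.log_pow,
        Real.log_div (by positivity) (by positivity), Real.log_exp] at this
      linarith [this]
    have hlogN : Real.log N = Real.log m + Real.log T := by
      rw [hN]; push_cast; exact Real.log_mul (by positivity) (by positivity)
    -- log(m/d) ≤ (m/d)/e
    have hlogu : Real.log ((m:ℝ)/d) ≤ ((m:ℝ)/d) * 0.368 := by
      have hu : (0:ℝ) < (m:ℝ)/d := by positivity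
      have h1 : Real.log (((m:ℝ)/d) / Real.exp 1) ≤ ((m:ℝ)/d) / Real.exp 1 - 1 :=
        Real.log_le_sub_one_of_pos (by positivity)
      rw [Real.log_div (by positivity) (by positivity), Real.log_exp] at h1
      have he : (2.7182818283 : ℝ) < Real.exp 1 := Real.exp_one_gt_d9
      have h2 : ((m:ℝ)/d) / Real.exp 1 ≤ ((m:ℝ)/d) * 0.368 := by
        rw [div_le_iff₀ (by positivity)]
        nlinarith
      linarith
    have hsplit : Real.log d - Real.log N = -(Real.log ((m:ℝ)/d) + Real.log T) := by
      rw [hlogN, Real.log_div (by positivity) (by positivity)]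
      ring
    rw [hsplit] at hlogineq
    have hfin : (m:ℝ) * Real.log 2 ≤ d + d * Real.log T + 0.368 * m := by
      have hdu : (d:ℝ) * (((m:ℝ)/d) * 0.368) = 0.368 * m := by
        field_simp
      nlinarith [mul_le_mul_of_nonneg_left hlogu (le_of_lt hdpos)]
    nlinarith [mul_le_mul_of_nonneg_left hlogT0 (le_of_lt hmpos),
      mul_le_mul_of_nonneg_left hlogT0 (le_of_lt hdpos)]

/-- for the 0-1 reward class, `VC(R_F) ≤ c · log T · VC(F)`
for a universal constant `c`. -/
theorem vc_reward01_le_log_T_mul_vc :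
    ∃ c : ℝ, 0 < c ∧
      ∀ (T : ℕ), 2 ≤ T → ∀ (d : ℕ), 1 ≤ d → ∀ (F : Set (List Bool → Bool)),
        VCdimLe F d →
        ∀ m (zs : Fin m → List Bool × List Bool),
          Shatters (rewardClass01 F T) zs →
          (m : ℝ) ≤ c * Real.log T * d := by
  refine ⟨10, by norm_num, ?_⟩
  intro T hT d hd F hF m zs hsh
  exact analytic hT hd (card_bound hF hsh)
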